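/- arXiv:1406.7447 — 3 statements merged into one kernel-verified Lean document; each statement's English description precedes it below -/
import Mathlib

section
/- Fix μ₁, μ₂ ∈ [0,1] with μ₁ ≤ μ₂, and define φ(λ₁, λ₂) = kl(μ₁, λ₁) + kl(μ₂, λ₂) on the set Λ = {(λ₁, λ₂) ∈ [0,1]² : λ₁ ≥ λ₂}. Then the infimum of φ over Λ equals kl(μ₁, (μ₁+μ₂)/2) + kl(μ₂, (μ₁+μ₂)/2); in particular, every minimizer satisfies λ₁ = λ₂. -/
/-- Bernoulli KL divergence `kl(p,q)`, with values in `EReal`: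
`kl(p,q) = +∞` when `q ∈ {0,1}` and `p ≠ q`, and the convention `0·log 0 = 0`. -/
noncomputable def klBern (p q : ℝ) : EReal :=
  if p = q then 0
  else if q = 0 ∨ q = 1 then ⊤
  else ((p * Real.log (p / q) + (1 - p) * Real.log ((1 - p) / (1 - q)) : ℝ) : EReal)

noncomputable def klR (p q : ℝ) : ℝ :=
  p * Real.log (p / q) + (1 - p) * Real.log ((1 - p) / (1 - q))


lemma klBern_self (p : ℝ) : klBern p p = 0 := by simp [klBern]

lemma klR_self {q : ℝ} (hq0 : q ≠ 0) (hq1 : q ≠ 1) : klR q q = 0 := by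
  simp [klR, div_self hq0, div_self (sub_ne_zero.2 (Ne.symm hq1))]

lemma klBern_of_Ioo (p : ℝ) {q : ℝ} (hq : q ∈ Set.Ioo (0:ℝ) 1) :
    klBern p q = ((klR p q : ℝ) : EReal) := by
  obtain ⟨hq0, hq1⟩ := hq
  rcases eq_or_ne p q with rfl | hpq
  · rw [klBern_self, klR_self hq0.ne' hq1.ne]; simp
  · rw [klBern, if_neg hpq, if_neg (by push_neg; exact ⟨hq0.ne', hq1.ne⟩)]
    rfl

lemma klBern_ne_bot (p q : ℝ) : klBern p q ≠ ⊥ := by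
  rw [klBern]
  split_ifs
  · simp
  · simp
  · exact EReal.coe_ne_bot _

lemma mul_log_div_ge (a b : ℝ) (ha : 0 ≤ a) (hb : 0 < b) :
    a - b ≤ a * Real.log (a / b) := by
  rcases eq_or_lt_of_le ha with rfl | ha'
  · simp; linarith
  · have h1 : Real.log (b / a) ≤ b / a - 1 :=
      Real.log_le_sub_one_of_pos (div_pos hb ha')
    have h2 : Real.log (a / b) = - Real.log (b / a) := by
      rw [← Real.log_inv]; congr 1; field_simp
    have h3 : a * Real.log (b / a) ≤ a * (b / a - 1) :=
      mul_le_mul_of_nonneg_left h1 ha'.le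
    have h4 : a * (b / a - 1) = b - a := by field_simp
    have h5 : a * Real.log (a / b) = -(a * Real.log (b / a)) := by rw [h2]; ring
    linarith

lemma mul_log_div_gt (a b : ℝ) (ha : 0 < a) (hb : 0 < b) (hne : a ≠ b) :
    a - b < a * Real.log (a / b) := by
  have h1 : Real.log (b / a) < b / a - 1 := by
    apply Real.log_lt_sub_one_of_pos (div_pos hb ha)
    intro hc
    exact hne (by field_simp at hc; linarith)
  have h2 : Real.log (a / b) = - Real.log (b / a) := by
    rw [← Real.log_inv]; congr 1; field_simp
  have h3 : a * Real.log (b / a) < a * (b / a - 1) :=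
    mul_lt_mul_of_pos_left h1 ha
  have h4 : a * (b / a - 1) = b - a := by field_simp
  have h5 : a * Real.log (a / b) = -(a * Real.log (b / a)) := by rw [h2]; ring
  linarith

lemma klR_nonneg {p q : ℝ} (hp : p ∈ Set.Icc (0:ℝ) 1) (hq : q ∈ Set.Ioo (0:ℝ) 1) :
    0 ≤ klR p q := by
  have h1 := mul_log_div_ge p q hp.1 hq.1
  have h2 := mul_log_div_ge (1 - p) (1 - q) (by linarith [hp.2]) (by linarith [hq.2])
  rw [klR]; linarith

lemma klR_pos {p q : ℝ} (hp : p ∈ Set.Icc (0:ℝ) 1) (hq : q ∈ Set.Ioo (0:ℝ) 1)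
    (hne : p ≠ q) : 0 < klR p q := by
  obtain ⟨hq0, hq1⟩ := hq
  rcases eq_or_lt_of_le hp.1 with rfl | hp0
  · have h : klR 0 q = Real.log (1 / (1 - q)) := by simp [klR]
    rw [h, Real.log_div one_ne_zero (by linarith : (1:ℝ) - q ≠ 0)]
    simp only [Real.log_one]
    have := Real.log_neg (by linarith : (0:ℝ) < 1 - q) (by linarith)
    linarith
  rcases eq_or_lt_of_le hp.2 with rfl | hp1
  · have h : klR 1 q = Real.log (1 / q) := by simp [klR]
    rw [h, Real.log_div one_ne_zero hq0.ne']
    simp only [Real.log_one]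
    have := Real.log_neg hq0 hq1
    linarith
  · have h1 := mul_log_div_gt p q hp0 hq0 hne
    have h2 := mul_log_div_ge (1 - p) (1 - q) (by linarith) (by linarith)
    rw [klR]; linarith

lemma mul_log_div_eq (a b : ℝ) (hb : b ≠ 0) :
    a * Real.log (a / b) = a * Real.log a - a * Real.log b := by
  rcases eq_or_ne a 0 with rfl | ha
  · simp
  · rw [Real.log_div ha hb]; ring

lemma klR_eq (p : ℝ) {q : ℝ} (hq : q ∈ Set.Ioo (0:ℝ) 1) :
    klR p q = (p * Real.log p + (1 - p) * Real.log (1 - p))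
      - (p * Real.log q + (1 - p) * Real.log (1 - q)) := by
  rw [klR, mul_log_div_eq p q hq.1.ne',
    mul_log_div_eq (1 - p) (1 - q) (sub_ne_zero.2 hq.2.ne')]
  ring

lemma key_identity (μ₁ μ₂ : ℝ) {lam₁ lam₂ : ℝ}
    (hl1 : lam₁ ∈ Set.Ioo (0:ℝ) 1) (hl2 : lam₂ ∈ Set.Ioo (0:ℝ) 1)
    (hm : (μ₁ + μ₂) / 2 ∈ Set.Ioo (0:ℝ) 1) :
    klR μ₁ lam₁ + klR μ₂ lam₂
      = klR μ₁ ((μ₁ + μ₂) / 2) + klR μ₂ ((μ₁ + μ₂) / 2)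
        + klR ((μ₁ + μ₂) / 2) lam₁ + klR ((μ₁ + μ₂) / 2) lam₂
        + (μ₂ - μ₁) / 2 * ((Real.log lam₁ - Real.log (1 - lam₁))
            - (Real.log lam₂ - Real.log (1 - lam₂))) := by
  rw [klR_eq μ₁ hl1, klR_eq μ₂ hl2, klR_eq μ₁ hm, klR_eq μ₂ hm,
    klR_eq _ hl1, klR_eq _ hl2]
  ring

lemma core_le (μ₁ μ₂ : ℝ) {lam₁ lam₂ : ℝ} (hμ : μ₁ ≤ μ₂)
    (hl1 : lam₁ ∈ Set.Ioo (0:ℝ) 1) (hl2 : lam₂ ∈ Set.Ioo (0:ℝ) 1)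
    (hm : (μ₁ + μ₂) / 2 ∈ Set.Ioo (0:ℝ) 1) (hle : lam₂ ≤ lam₁) :
    klR μ₁ ((μ₁ + μ₂) / 2) + klR μ₂ ((μ₁ + μ₂) / 2) ≤ klR μ₁ lam₁ + klR μ₂ lam₂ := by
  rw [key_identity μ₁ μ₂ hl1 hl2 hm]
  have hmIcc : (μ₁ + μ₂) / 2 ∈ Set.Icc (0:ℝ) 1 := ⟨hm.1.le, hm.2.le⟩
  have n1 := klR_nonneg hmIcc hl1
  have n2 := klR_nonneg hmIcc hl2
  have l1 : Real.log lam₂ ≤ Real.log lam₁ := Real.log_le_log hl2.1 hle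
  have l2 : Real.log (1 - lam₁) ≤ Real.log (1 - lam₂) :=
    Real.log_le_log (by linarith [hl1.2]) (by linarith)
  nlinarith

lemma core_lt (μ₁ μ₂ : ℝ) {lam₁ lam₂ : ℝ} (hμ : μ₁ < μ₂)
    (hl1 : lam₁ ∈ Set.Ioo (0:ℝ) 1) (hl2 : lam₂ ∈ Set.Ioo (0:ℝ) 1)
    (hm : (μ₁ + μ₂) / 2 ∈ Set.Ioo (0:ℝ) 1) (hlt : lam₂ < lam₁) :
    klR μ₁ ((μ₁ + μ₂) / 2) + klR μ₂ ((μ₁ + μ₂) / 2) < klR μ₁ lam₁ + klR μ₂ lam₂ := by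
  rw [key_identity μ₁ μ₂ hl1 hl2 hm]
  have hmIcc : (μ₁ + μ₂) / 2 ∈ Set.Icc (0:ℝ) 1 := ⟨hm.1.le, hm.2.le⟩
  have n1 := klR_nonneg hmIcc hl1
  have n2 := klR_nonneg hmIcc hl2
  have l1 : Real.log lam₂ < Real.log lam₁ := Real.log_lt_log hl2.1 hlt
  have l2 : Real.log (1 - lam₁) < Real.log (1 - lam₂) :=
    Real.log_lt_log (by linarith [hl1.2]) (by linarith)
  nlinarith

lemma klBern_nonneg {p q : ℝ} (hp : p ∈ Set.Icc (0:ℝ) 1) (hq : q ∈ Set.Icc (0:ℝ) 1) :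
    0 ≤ klBern p q := by
  rcases eq_or_ne p q with rfl | hpq
  · rw [klBern_self]
  rcases eq_or_ne q 0 with rfl | hq0
  · rw [klBern, if_neg hpq, if_pos (Or.inl rfl)]; exact le_top
  rcases eq_or_ne q 1 with rfl | hq1
  · rw [klBern, if_neg hpq, if_pos (Or.inr rfl)]; exact le_top
  · have hqIoo : q ∈ Set.Ioo (0:ℝ) 1 := ⟨lt_of_le_of_ne hq.1 (Ne.symm hq0),
      lt_of_le_of_ne hq.2 hq1⟩
    rw [klBern_of_Ioo p hqIoo]
    exact_mod_cast klR_nonneg hp hqIoo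

lemma klBern_eq_zero {p q : ℝ} (hp : p ∈ Set.Icc (0:ℝ) 1) (hq : q ∈ Set.Icc (0:ℝ) 1)
    (h : klBern p q = 0) : p = q := by
  by_contra hpq
  rcases eq_or_ne q 0 with rfl | hq0
  · rw [klBern, if_neg hpq, if_pos (Or.inl rfl)] at h; simp at h
  rcases eq_or_ne q 1 with rfl | hq1
  · rw [klBern, if_neg hpq, if_pos (Or.inr rfl)] at h; simp at h
  · have hqIoo : q ∈ Set.Ioo (0:ℝ) 1 := ⟨lt_of_le_of_ne hq.1 (Ne.symm hq0),
      lt_of_le_of_ne hq.2 hq1⟩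
    rw [klBern_of_Ioo p hqIoo] at h
    have : klR p q = 0 := by exact_mod_cast h
    exact absurd this (klR_pos hp hqIoo hpq).ne'

lemma lower (μ₁ μ₂ : ℝ) (h₁ : μ₁ ∈ Set.Icc (0:ℝ) 1) (h₂ : μ₂ ∈ Set.Icc (0:ℝ) 1)
    (hμ : μ₁ < μ₂) {lam₁ lam₂ : ℝ} (hl1 : lam₁ ∈ Set.Icc (0:ℝ) 1)
    (hl2 : lam₂ ∈ Set.Icc (0:ℝ) 1) (hle : lam₂ ≤ lam₁) :
    klBern μ₁ ((μ₁ + μ₂) / 2) + klBern μ₂ ((μ₁ + μ₂) / 2)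
      ≤ klBern μ₁ lam₁ + klBern μ₂ lam₂ ∧
    (klBern μ₁ lam₁ + klBern μ₂ lam₂
      = klBern μ₁ ((μ₁ + μ₂) / 2) + klBern μ₂ ((μ₁ + μ₂) / 2) → lam₁ = lam₂) := by
  have hm : (μ₁ + μ₂) / 2 ∈ Set.Ioo (0:ℝ) 1 :=
    ⟨by linarith [h₁.1], by linarith [h₂.2]⟩
  have hV : klBern μ₁ ((μ₁ + μ₂) / 2) + klBern μ₂ ((μ₁ + μ₂) / 2)
      = ((klR μ₁ ((μ₁ + μ₂) / 2) + klR μ₂ ((μ₁ + μ₂) / 2) : ℝ) : EReal) := by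
    rw [klBern_of_Ioo _ hm, klBern_of_Ioo _ hm, EReal.coe_add]
  rcases eq_or_ne lam₁ 0 with rfl | c1
  · have hl20 : lam₂ = 0 := le_antisymm hle hl2.1
    subst hl20
    have ht : klBern μ₂ 0 = ⊤ := by
      rw [klBern, if_neg (by linarith [h₁.1] : μ₂ ≠ 0), if_pos (Or.inl rfl)]
    rw [ht, EReal.add_top_of_ne_bot (klBern_ne_bot _ _)]
    exact ⟨le_top, fun _ => rfl⟩
  rcases eq_or_ne lam₂ 1 with rfl | c2
  · have hl11 : lam₁ = 1 := le_antisymm hl1.2 hle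
    subst hl11
    have ht : klBern μ₁ 1 = ⊤ := by
      rw [klBern, if_neg (by linarith [h₂.2] : μ₁ ≠ 1), if_pos (Or.inr rfl)]
    rw [ht, EReal.top_add_of_ne_bot (klBern_ne_bot _ _)]
    exact ⟨le_top, fun _ => rfl⟩
  rcases eq_or_ne lam₁ 1 with rfl | c3
  · have ht : klBern μ₁ 1 = ⊤ := by
      rw [klBern, if_neg (by linarith [h₂.2] : μ₁ ≠ 1), if_pos (Or.inr rfl)]
    rw [ht, EReal.top_add_of_ne_bot (klBern_ne_bot _ _), hV]
    exact ⟨le_top, fun hc => absurd hc.symm (EReal.coe_ne_top _)⟩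
  rcases eq_or_ne lam₂ 0 with rfl | c4
  · have ht : klBern μ₂ 0 = ⊤ := by
      rw [klBern, if_neg (by linarith [h₁.1] : μ₂ ≠ 0), if_pos (Or.inl rfl)]
    rw [ht, EReal.add_top_of_ne_bot (klBern_ne_bot _ _), hV]
    exact ⟨le_top, fun hc => absurd hc.symm (EReal.coe_ne_top _)⟩
  · have hl1' : lam₁ ∈ Set.Ioo (0:ℝ) 1 :=
      ⟨lt_of_le_of_ne hl1.1 (Ne.symm c1), lt_of_le_of_ne hl1.2 c3⟩
    have hl2' : lam₂ ∈ Set.Ioo (0:ℝ) 1 :=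
      ⟨lt_of_le_of_ne hl2.1 (Ne.symm c4), lt_of_le_of_ne hl2.2 c2⟩
    rw [hV, klBern_of_Ioo _ hl1', klBern_of_Ioo _ hl2', ← EReal.coe_add]
    constructor
    · exact EReal.coe_le_coe_iff.2 (core_le μ₁ μ₂ hμ.le hl1' hl2' hm hle)
    · intro hc
      have hr := EReal.coe_eq_coe_iff.1 hc
      by_contra hne
      have hlt : lam₂ < lam₁ := lt_of_le_of_ne hle (fun e => hne e.symm)
      exact absurd hr (ne_of_gt (core_lt μ₁ μ₂ hμ hl1' hl2' hm hlt))

/-- The infimum of `kl(μ₁,λ₁) + kl(μ₂,λ₂)` over `{λ₁ ≥ λ₂} ⊆ [0,1]²` is attained on the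
diagonal and equals its value at the midpoint; every minimizer satisfies `λ₁ = λ₂`. -/
theorem klBern_inf_over_ordered_pairs (μ₁ μ₂ : ℝ) (h₁ : μ₁ ∈ Set.Icc (0:ℝ) 1)
    (h₂ : μ₂ ∈ Set.Icc (0:ℝ) 1) (h : μ₁ ≤ μ₂) :
    (⨅ p : {p : ℝ × ℝ // p.1 ∈ Set.Icc (0:ℝ) 1 ∧ p.2 ∈ Set.Icc (0:ℝ) 1 ∧ p.2 ≤ p.1},
        klBern μ₁ p.1.1 + klBern μ₂ p.1.2)
      = klBern μ₁ ((μ₁ + μ₂) / 2) + klBern μ₂ ((μ₁ + μ₂) / 2) ∧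
    ∀ lam₁ lam₂ : ℝ, lam₁ ∈ Set.Icc (0:ℝ) 1 → lam₂ ∈ Set.Icc (0:ℝ) 1 → lam₂ ≤ lam₁ →
      klBern μ₁ lam₁ + klBern μ₂ lam₂
        = klBern μ₁ ((μ₁ + μ₂) / 2) + klBern μ₂ ((μ₁ + μ₂) / 2) →
      lam₁ = lam₂ := by
  rcases eq_or_lt_of_le h with rfl | hμ
  · -- μ₂ = μ₁
    have hmid : (μ₁ + μ₁) / 2 = μ₁ := by ring
    rw [hmid, klBern_self, add_zero]
    constructor
    · apply le_antisymm
      · have := iInf_le (fun p : {p : ℝ × ℝ // p.1 ∈ Set.Icc (0:ℝ) 1 ∧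
            p.2 ∈ Set.Icc (0:ℝ) 1 ∧ p.2 ≤ p.1} => klBern μ₁ p.1.1 + klBern μ₁ p.1.2)
          ⟨(μ₁, μ₁), h₁, h₁, le_refl _⟩
        simpa [klBern_self] using this
      · exact le_iInf fun p => add_nonneg (klBern_nonneg h₁ p.2.1) (klBern_nonneg h₁ p.2.2.1)
    · intro lam₁ lam₂ hl1 hl2 _ hc
      have n1 := klBern_nonneg h₁ hl1
      have n2 := klBern_nonneg h₁ hl2
      have e1 : klBern μ₁ lam₁ = 0 := by
        refine le_antisymm ?_ n1
        calc klBern μ₁ lam₁ = klBern μ₁ lam₁ + 0 := by rw [add_zero]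
          _ ≤ klBern μ₁ lam₁ + klBern μ₁ lam₂ := add_le_add_right n2 _
          _ = 0 := hc
      have e2 : klBern μ₁ lam₂ = 0 := by
        refine le_antisymm ?_ n2
        calc klBern μ₁ lam₂ = 0 + klBern μ₁ lam₂ := by rw [zero_add]
          _ ≤ klBern μ₁ lam₁ + klBern μ₁ lam₂ := add_le_add_left n1 _
          _ = 0 := hc
      rw [← klBern_eq_zero h₁ hl1 e1, ← klBern_eq_zero h₁ hl2 e2]
  · constructor
    · apply le_antisymm
      · have hm : (μ₁ + μ₂) / 2 ∈ Set.Icc (0:ℝ) 1 :=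
          ⟨by linarith [h₁.1], by linarith [h₂.2]⟩
        exact iInf_le (fun p : {p : ℝ × ℝ // p.1 ∈ Set.Icc (0:ℝ) 1 ∧
            p.2 ∈ Set.Icc (0:ℝ) 1 ∧ p.2 ≤ p.1} => klBern μ₁ p.1.1 + klBern μ₂ p.1.2)
          ⟨((μ₁ + μ₂) / 2, (μ₁ + μ₂) / 2), hm, hm, le_refl _⟩
      · exact le_iInf fun p => (lower μ₁ μ₂ h₁ h₂ hμ p.2.1 p.2.2.1 p.2.2.2).1
    · intro lam₁ lam₂ hl1 hl2 hle hc
      exact (lower μ₁ μ₂ h₁ h₂ hμ hl1 hl2 hle).2 hc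
end

section
/- Let μ : [0,1] → ℝ be unimodal with maximizer x* (strictly increasing on [0,x*], strictly decreasing on [x*,1]), and suppose there exist constants C₁ > 0 and ξ > 0 such that μ(x) − μ(y) ≥ C₁(|x*−y|^ξ − |x*−x|^ξ) for all 0 ≤ y ≤ x ≤ x* and all x* ≤ x ≤ y ≤ 1. Then for every Δ with 0 < Δ and x* + Δ/2 ≤ 1, min_{x ∈ [x*, x*+Δ/4]} (μ(x) − μ(x + Δ/4)) ≥ C₁ · min(1, 2^ξ − 1) · (Δ/4)^ξ. -/
open Set
open scoped NNReal

lemma real_superadd {t d ξ : ℝ} (ht : 0 ≤ t) (hd : 0 ≤ d) (hξ : 1 ≤ ξ) :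
    t ^ ξ + d ^ ξ ≤ (t + d) ^ ξ := by
  have h := NNReal.add_rpow_le_rpow_add (t.toNNReal) (d.toNNReal) hξ
  have := NNReal.coe_le_coe.mpr h
  rw [NNReal.coe_add, NNReal.coe_rpow, NNReal.coe_rpow, NNReal.coe_rpow, NNReal.coe_add,
    Real.coe_toNNReal t ht, Real.coe_toNNReal d hd] at this
  exact this

lemma gap_antitone {d ξ : ℝ} (hd : 0 < d) (hξ0 : 0 < ξ) (hξ : ξ ≤ 1) :
    AntitoneOn (fun x : ℝ => (x + d) ^ ξ - x ^ ξ) (Ici (0:ℝ)) := by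
  have hderiv : ∀ x : ℝ, 0 < x → HasDerivAt (fun x : ℝ => (x + d) ^ ξ - x ^ ξ)
      (ξ * (x + d) ^ (ξ - 1) * 1 - ξ * x ^ (ξ - 1)) x := by
    intro x hx
    have h1 : HasDerivAt (fun x : ℝ => (x + d) ^ ξ) (ξ * (x + d) ^ (ξ - 1) * 1) x := by
      have hbase : HasDerivAt (fun x : ℝ => x + d) 1 x := (hasDerivAt_id x).add_const d
      exact (Real.hasDerivAt_rpow_const (Or.inl (by positivity : (0:ℝ) < x + d).ne')).comp x hbase
    have h2 : HasDerivAt (fun x : ℝ => x ^ ξ) (ξ * x ^ (ξ - 1)) x :=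
      Real.hasDerivAt_rpow_const (Or.inl hx.ne')
    exact h1.sub h2
  apply antitoneOn_of_deriv_nonpos (convex_Ici 0)
  · apply ContinuousOn.sub
    · exact (continuousOn_id.add continuousOn_const).rpow_const fun x _ => Or.inr hξ0.le
    · exact continuousOn_id.rpow_const fun x _ => Or.inr hξ0.le
  · rw [interior_Ici]
    intro x hx
    exact (hderiv x hx).differentiableAt.differentiableWithinAt
  · rw [interior_Ici]
    intro x hx
    rw [(hderiv x hx).deriv]
    have : (x + d) ^ (ξ - 1) ≤ x ^ (ξ - 1) :=
      Real.rpow_le_rpow_of_nonpos hx (by linarith) (by linarith)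
    nlinarith [hξ0.le]

lemma key_gap {t d ξ : ℝ} (hξ : 0 < ξ) (hd : 0 < d) (ht : 0 ≤ t) (htd : t ≤ d) :
    min 1 ((2:ℝ) ^ ξ - 1) * d ^ ξ ≤ (t + d) ^ ξ - t ^ ξ := by
  have hdξ : (0:ℝ) ≤ d ^ ξ := Real.rpow_nonneg hd.le ξ
  rcases le_or_gt 1 ξ with h1 | h1
  · calc min 1 ((2:ℝ) ^ ξ - 1) * d ^ ξ ≤ 1 * d ^ ξ := by
          apply mul_le_mul_of_nonneg_right (min_le_left _ _) hdξ
      _ = d ^ ξ := one_mul _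
      _ ≤ (t + d) ^ ξ - t ^ ξ := by
          have := real_superadd ht hd.le h1
          linarith
  · have hanti := gap_antitone hd hξ h1.le
    have := hanti (mem_Ici.mpr ht) (mem_Ici.mpr hd.le) htd
    have h2d : (d + d) ^ ξ = 2 ^ ξ * d ^ ξ := by
      rw [show d + d = 2 * d by ring, Real.mul_rpow (by norm_num) hd.le]
    calc min 1 ((2:ℝ) ^ ξ - 1) * d ^ ξ ≤ ((2:ℝ) ^ ξ - 1) * d ^ ξ := by
          apply mul_le_mul_of_nonneg_right (min_le_right _ _) hdξ
      _ = (d + d) ^ ξ - d ^ ξ := by rw [h2d]; ring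
      _ ≤ (t + d) ^ ξ - t ^ ξ := this

/-- Lower bound on the local decrease of a unimodal function satisfying (P1):
`h_μ`-type bound `μ(x) − μ(x+Δ/4) ≥ C₁ min(1, 2^ξ−1)(Δ/4)^ξ` on `[x*, x*+Δ/4]`. -/
theorem unimodal_local_gap_lower_bound
    (μ : ℝ → ℝ) (xstar : ℝ) (hx : xstar ∈ Icc (0:ℝ) 1)
    (hmono : StrictMonoOn μ (Icc 0 xstar)) (hanti : StrictAntiOn μ (Icc xstar 1))
    (C₁ ξ : ℝ) (hC₁ : 0 < C₁) (hξ : 0 < ξ)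
    (hP1 : (∀ x y : ℝ, 0 ≤ y → y ≤ x → x ≤ xstar →
        μ x - μ y ≥ C₁ * (|xstar - y| ^ ξ - |xstar - x| ^ ξ)) ∧
      (∀ x y : ℝ, xstar ≤ x → x ≤ y → y ≤ 1 →
        μ x - μ y ≥ C₁ * (|xstar - y| ^ ξ - |xstar - x| ^ ξ)))
    (Δ : ℝ) (hΔ : 0 < Δ) (hΔ1 : xstar + Δ / 2 ≤ 1) :
    ∀ x ∈ Icc xstar (xstar + Δ / 4),
      μ x - μ (x + Δ / 4) ≥ C₁ * min 1 ((2:ℝ) ^ ξ - 1) * (Δ / 4) ^ ξ := by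
  intro x hxm
  obtain ⟨hx1, hx2⟩ := hxm
  set d : ℝ := Δ / 4 with hdef
  have hd : 0 < d := by positivity
  have hxd1 : x + d ≤ 1 := by
    have : x + d ≤ xstar + Δ / 2 := by rw [hdef]; linarith
    linarith
  have hmain := hP1.2 x (x + d) hx1 (by linarith) hxd1
  have habs1 : |xstar - (x + d)| = x + d - xstar := by
    rw [abs_of_nonpos (by linarith)]; ring
  have habs2 : |xstar - x| = x - xstar := by
    rw [abs_of_nonpos (by linarith)]; ring
  rw [habs1, habs2] at hmain
  have hkey : min 1 ((2:ℝ) ^ ξ - 1) * d ^ ξ ≤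
      ((x - xstar) + d) ^ ξ - (x - xstar) ^ ξ :=
    key_gap hξ hd (by linarith) (by linarith)
  have : C₁ * min 1 ((2:ℝ) ^ ξ - 1) * d ^ ξ ≤
      C₁ * ((x + d - xstar) ^ ξ - (x - xstar) ^ ξ) := by
    rw [mul_assoc]
    apply mul_le_mul_of_nonneg_left _ hC₁.le
    have : x + d - xstar = (x - xstar) + d := by ring
    rw [this]
    exact hkey
  linarith
end

section
/- Fix μ₁ < μ₂ in [0,1], Bernoulli KL divergence kl, and define KL*(μ₁,μ₂) = kl(μ₁, (μ₁+μ₂)/2) + kl(μ₂, (μ₁+μ₂)/2). Let B ⊆ ([0,1]²) be the set {(λ₁,λ₂) : λ₁ ≥ λ₂}. Then inf_{(λ₁,λ₂) ∈ B} [kl(μ₁,λ₁) + kl(μ₂,λ₂)] = KL*(μ₁,μ₂) > 0. -/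
noncomputable def phiB (p q : ℝ) : ℝ := p * Real.log q + (1 - p) * Real.log (1 - q)

lemma phiB_hasDeriv (p : ℝ) {q : ℝ} (hq : q ∈ Set.Ioo (0:ℝ) 1) :
    HasDerivAt (phiB p) (p / q - (1 - p) / (1 - q)) q := by
  have h1 : HasDerivAt Real.log (1/q) q := by
    simpa [one_div] using Real.hasDerivAt_log (ne_of_gt hq.1)
  have h2 : HasDerivAt (fun x : ℝ => Real.log (1 - x)) (-(1/(1-q))) q := by
    have : HasDerivAt (fun x : ℝ => 1 - x) (-1) q := by
      simpa using (hasDerivAt_id q).const_sub 1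
    simpa [one_div, Function.comp_def] using (Real.hasDerivAt_log (by linarith [hq.2] : (1:ℝ) - q ≠ 0)).comp q this
  have : HasDerivAt (phiB p) (p * (1 / q) + (1 - p) * -(1 / (1 - q))) q :=
    ((h1.const_mul p).add (h2.const_mul (1 - p)))
  convert this using 1
  ring

lemma phiB_contOn (p : ℝ) {s : Set ℝ} (hs : s ⊆ Set.Ioo (0:ℝ) 1) :
    ContinuousOn (phiB p) s := by
  apply ContinuousOn.add
  · exact (continuousOn_const.mul ((Real.continuousOn_log).comp continuousOn_id
      (fun x hx => ne_of_gt (hs hx).1)))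
  · exact (continuousOn_const.mul ((Real.continuousOn_log).comp
      (continuousOn_const.sub continuousOn_id)
      (fun x hx => by have := (hs hx).2; simp; linarith)))

lemma phiB_monoOn {p c : ℝ} (hp : p ≤ 1) (hc0 : 0 < c) (hcp : c ≤ p) (hc1 : c < 1) :
    MonotoneOn (phiB p) (Set.Ioc 0 c) := by
  have hsub : Set.Ioc (0:ℝ) c ⊆ Set.Ioo 0 1 := fun x hx => ⟨hx.1, lt_of_le_of_lt hx.2 hc1⟩
  apply monotoneOn_of_deriv_nonneg (convex_Ioc 0 c) (phiB_contOn p hsub)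
  · intro x hx
    rw [interior_Ioc] at hx
    exact (phiB_hasDeriv p ⟨hx.1, lt_trans hx.2 hc1⟩).differentiableAt.differentiableWithinAt
  · intro x hx
    rw [interior_Ioc] at hx
    have hx' : x ∈ Set.Ioo (0:ℝ) 1 := ⟨hx.1, lt_trans hx.2 hc1⟩
    rw [(phiB_hasDeriv p hx').deriv]
    rw [sub_nonneg, div_le_div_iff₀ (by linarith [hx'.2]) hx'.1]
    nlinarith [hx.2, hcp]

lemma phiB_antiOn {p c : ℝ} (hp : 0 ≤ p) (hc0 : 0 < c) (hcp : p ≤ c) (hc1 : c < 1) :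
    AntitoneOn (phiB p) (Set.Ico c 1) := by
  have hsub : Set.Ico c (1:ℝ) ⊆ Set.Ioo 0 1 := fun x hx => ⟨lt_of_lt_of_le hc0 hx.1, hx.2⟩
  apply antitoneOn_of_deriv_nonpos (convex_Ico c 1) (phiB_contOn p hsub)
  · intro x hx
    rw [interior_Ico] at hx
    exact (phiB_hasDeriv p ⟨lt_trans hc0 hx.1, hx.2⟩).differentiableAt.differentiableWithinAt
  · intro x hx
    rw [interior_Ico] at hx
    have hx' : x ∈ Set.Ioo (0:ℝ) 1 := ⟨lt_trans hc0 hx.1, hx.2⟩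
    rw [(phiB_hasDeriv p hx').deriv]
    rw [sub_nonpos, div_le_div_iff₀ hx'.1 (by linarith [hx'.2])]
    nlinarith [hx.1, hcp]

/-- Gibbs inequality: `φ p q ≤ φ p p`. -/
lemma phiB_le (p q : ℝ) (hp : p ∈ Set.Icc (0:ℝ) 1) (hq : q ∈ Set.Ioo (0:ℝ) 1) :
    phiB p q ≤ phiB p p := by
  rcases eq_or_lt_of_le hp.1 with h0 | h0
  · simp [phiB, ← h0]
    have : Real.log (1 - q) ≤ 0 := Real.log_nonpos (by linarith [hq.2]) (by linarith [hq.1])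
    linarith
  rcases eq_or_lt_of_le hp.2 with h1 | h1
  · simp [phiB, h1]
    exact Real.log_nonpos (le_of_lt hq.1) (le_of_lt hq.2)
  have e1 : Real.log q ≤ Real.log p + (q / p - 1) := by
    have := Real.log_le_sub_one_of_pos (show 0 < q / p from div_pos hq.1 h0)
    rw [Real.log_div (ne_of_gt hq.1) (ne_of_gt h0)] at this
    linarith
  have e2 : Real.log (1 - q) ≤ Real.log (1 - p) + ((1 - q) / (1 - p) - 1) := by
    have h1q : (0:ℝ) < 1 - q := by linarith [hq.2]
    have h1p : (0:ℝ) < 1 - p := by linarith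
    have := Real.log_le_sub_one_of_pos (show 0 < (1-q)/(1-p) from div_pos h1q h1p)
    rw [Real.log_div (ne_of_gt h1q) (ne_of_gt h1p)] at this
    linarith
  have this1 : p * Real.log q + (1-p) * Real.log (1-q) ≤
      p * (Real.log p + (q/p - 1)) + (1-p) * (Real.log (1-p) + ((1-q)/(1-p) - 1)) := by
    have := mul_le_mul_of_nonneg_left e1 (le_of_lt h0)
    have := mul_le_mul_of_nonneg_left e2 (by linarith : (0:ℝ) ≤ 1 - p)
    linarith
  have key : p * (q/p - 1) + (1-p) * ((1-q)/(1-p) - 1) = 0 := by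
    have hp0 : p ≠ 0 := ne_of_gt h0
    have h1p : (1:ℝ) - p ≠ 0 := by linarith
    field_simp
    ring
  simpa [phiB] using by nlinarith [this1, key]

/-- Strict Gibbs inequality. -/
lemma phiB_lt (p q : ℝ) (hp : p ∈ Set.Icc (0:ℝ) 1) (hq : q ∈ Set.Ioo (0:ℝ) 1)
    (hne : p ≠ q) : phiB p q < phiB p p := by
  rcases eq_or_lt_of_le hp.1 with h0 | h0
  · simp [phiB, ← h0]
    exact Real.log_neg (by linarith [hq.2]) (by linarith [hq.1])
  rcases eq_or_lt_of_le hp.2 with h1 | h1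
  · simp [phiB, h1]
    exact Real.log_neg hq.1 hq.2
  have e1 : Real.log q < Real.log p + (q / p - 1) := by
    have hne' : q / p ≠ 1 := by
      intro hc; exact hne (by field_simp at hc; linarith)
    have := Real.log_lt_sub_one_of_pos (show 0 < q / p from div_pos hq.1 h0) hne'
    rw [Real.log_div (ne_of_gt hq.1) (ne_of_gt h0)] at this
    linarith
  have e2 : Real.log (1 - q) ≤ Real.log (1 - p) + ((1 - q) / (1 - p) - 1) := by
    have h1q : (0:ℝ) < 1 - q := by linarith [hq.2]
    have h1p : (0:ℝ) < 1 - p := by linarith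
    have := Real.log_le_sub_one_of_pos (show 0 < (1-q)/(1-p) from div_pos h1q h1p)
    rw [Real.log_div (ne_of_gt h1q) (ne_of_gt h1p)] at this
    linarith
  have key : p * (q/p - 1) + (1-p) * ((1-q)/(1-p) - 1) = 0 := by
    have hp0 : p ≠ 0 := ne_of_gt h0
    have h1p : (1:ℝ) - p ≠ 0 := by linarith
    field_simp
    ring
  have t1 := mul_lt_mul_of_pos_left e1 h0
  have t2 := mul_le_mul_of_nonneg_left e2 (by linarith : (0:ℝ) ≤ 1 - p)
  simp only [phiB]
  nlinarith [t1, t2, key]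

lemma klBern_eq {p q : ℝ} (hp : p ∈ Set.Icc (0:ℝ) 1) (hq : q ∈ Set.Ioo (0:ℝ) 1) :
    klBern p q = ((phiB p p - phiB p q : ℝ) : EReal) := by
  unfold klBern
  rcases eq_or_ne p q with rfl | hne
  · simp
  rw [if_neg hne, if_neg (by push_neg; exact ⟨ne_of_gt hq.1, ne_of_lt hq.2⟩)]
  congr 1
  have hq0 := ne_of_gt hq.1
  have hq1 : (1:ℝ) - q ≠ 0 := by have := hq.2; intro hc; linarith
  rcases eq_or_lt_of_le hp.1 with h0 | h0
  · simp [phiB, ← h0, Real.log_div one_ne_zero hq1]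
  rcases eq_or_lt_of_le hp.2 with h1 | h1
  · simp [phiB, h1, Real.log_div one_ne_zero hq0]
  rw [Real.log_div (ne_of_gt h0) hq0,
    Real.log_div (by intro hc; linarith : (1:ℝ) - p ≠ 0) hq1]
  simp [phiB]; ring

/-- The infimum of `kl(μ₁,λ₁) + kl(μ₂,λ₂)` over `{(λ₁,λ₂) ∈ [0,1]² : λ₁ ≥ λ₂}` equals
`KL*(μ₁,μ₂) = kl(μ₁,(μ₁+μ₂)/2) + kl(μ₂,(μ₁+μ₂)/2)`, which is positive when `μ₁ < μ₂`. -/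
theorem klBern_inf_eq_KLstar_pos (μ₁ μ₂ : ℝ) (h₁ : μ₁ ∈ Set.Icc (0:ℝ) 1)
    (h₂ : μ₂ ∈ Set.Icc (0:ℝ) 1) (h : μ₁ < μ₂) :
    (⨅ p : {p : ℝ × ℝ // p.1 ∈ Set.Icc (0:ℝ) 1 ∧ p.2 ∈ Set.Icc (0:ℝ) 1 ∧ p.2 ≤ p.1},
        klBern μ₁ p.1.1 + klBern μ₂ p.1.2)
      = klBern μ₁ ((μ₁ + μ₂) / 2) + klBern μ₂ ((μ₁ + μ₂) / 2) ∧
    0 < klBern μ₁ ((μ₁ + μ₂) / 2) + klBern μ₂ ((μ₁ + μ₂) / 2) := by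
  set m : ℝ := (μ₁ + μ₂) / 2 with hm_def
  have h10 := h₁.1; have h11 := h₁.2; have h20 := h₂.1; have h21 := h₂.2
  have hm1 : μ₁ < m := by simp [hm_def]; linarith
  have hm2 : m < μ₂ := by simp [hm_def]; linarith
  have hmIoo : m ∈ Set.Ioo (0:ℝ) 1 := ⟨by linarith, by linarith⟩
  have hmIcc : m ∈ Set.Icc (0:ℝ) 1 := ⟨le_of_lt hmIoo.1, le_of_lt hmIoo.2⟩
  have hA : klBern μ₁ m = ((phiB μ₁ μ₁ - phiB μ₁ m : ℝ) : EReal) := klBern_eq h₁ hmIoo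
  have hB : klBern μ₂ m = ((phiB μ₂ μ₂ - phiB μ₂ m : ℝ) : EReal) := klBern_eq h₂ hmIoo
  have ha : 0 < phiB μ₁ μ₁ - phiB μ₁ m := by
    have := phiB_lt μ₁ m h₁ hmIoo (ne_of_lt hm1); linarith
  have hb : 0 < phiB μ₂ μ₂ - phiB μ₂ m := by
    have := phiB_lt μ₂ m h₂ hmIoo (ne_of_gt hm2); linarith
  -- the key combination identity
  have hcomb : ∀ lam : ℝ, phiB μ₁ lam + phiB μ₂ lam = 2 * phiB m lam := by
    intro lam; simp only [phiB, hm_def]; ring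
  -- general real lower bound
  have hlow : ∀ l₁ l₂ : ℝ, l₁ ∈ Set.Ioo (0:ℝ) 1 → l₂ ∈ Set.Ioo (0:ℝ) 1 → l₂ ≤ l₁ →
      phiB μ₁ l₁ + phiB μ₂ l₂ ≤ phiB μ₁ m + phiB μ₂ m := by
    intro l₁ l₂ hl₁ hl₂ hle
    have hid : phiB μ₁ m + phiB μ₂ m = 2 * phiB m m := hcomb m
    rcases le_or_gt l₁ m with hc | hc
    · -- l₂ ≤ l₁ ≤ m : move l₂ up to l₁, then use Gibbs at l₁
      have hmono := phiB_monoOn (p := μ₂) (c := m) h21 hmIoo.1 (le_of_lt hm2) hmIoo.2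
      have h1 : phiB μ₂ l₂ ≤ phiB μ₂ l₁ :=
        hmono ⟨hl₂.1, le_trans hle hc⟩ ⟨hl₁.1, hc⟩ hle
      have h2 : phiB m l₁ ≤ phiB m m := phiB_le m l₁ hmIcc hl₁
      have := hcomb l₁
      linarith
    rcases le_or_gt l₂ m with hd | hd
    · -- l₂ ≤ m ≤ l₁ : termwise
      have hmono := phiB_monoOn (p := μ₂) (c := m) h21 hmIoo.1 (le_of_lt hm2) hmIoo.2
      have h1 : phiB μ₂ l₂ ≤ phiB μ₂ m := hmono ⟨hl₂.1, hd⟩ ⟨hmIoo.1, le_refl m⟩ hd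
      have hanti := phiB_antiOn (p := μ₁) (c := m) h10 hmIoo.1 (le_of_lt hm1) hmIoo.2
      have h2 : phiB μ₁ l₁ ≤ phiB μ₁ m :=
        hanti ⟨le_refl m, hmIoo.2⟩ ⟨le_of_lt hc, hl₁.2⟩ (le_of_lt hc)
      linarith
    · -- m < l₂ ≤ l₁ : move l₁ down to l₂, then use Gibbs at l₂
      have hanti := phiB_antiOn (p := μ₁) (c := m) h10 hmIoo.1 (le_of_lt hm1) hmIoo.2
      have h1 : phiB μ₁ l₁ ≤ phiB μ₁ l₂ :=
        hanti ⟨le_of_lt hd, hl₂.2⟩ ⟨le_trans (le_of_lt hd) hle, hl₁.2⟩ hle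
      have h2 : phiB m l₂ ≤ phiB m m := phiB_le m l₂ hmIcc hl₂
      have := hcomb l₂
      linarith
  -- EReal lower bound for all feasible points
  have hLB : ∀ p : {p : ℝ × ℝ // p.1 ∈ Set.Icc (0:ℝ) 1 ∧ p.2 ∈ Set.Icc (0:ℝ) 1 ∧ p.2 ≤ p.1},
      klBern μ₁ m + klBern μ₂ m ≤ klBern μ₁ p.1.1 + klBern μ₂ p.1.2 := by
    rintro ⟨⟨l₁, l₂⟩, hl₁, hl₂, hle⟩
    simp only
    rcases eq_or_lt_of_le hl₂.1 with hz | hz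
    · -- l₂ = 0, so klBern μ₂ l₂ = ⊤
      have hz2 : l₂ = 0 := hz.symm
      have h2top : klBern μ₂ l₂ = ⊤ := by
        simp [klBern, hz2, ne_of_gt (lt_of_le_of_lt h10 h)]
      rw [h2top]
      calc klBern μ₁ m + klBern μ₂ m ≤ ⊤ := le_top
      _ = 0 + ⊤ := by simp
      _ ≤ klBern μ₁ l₁ + ⊤ := add_le_add (klBern_nonneg h₁ hl₁) le_rfl
    rcases eq_or_lt_of_le hl₁.2 with ho | ho
    · -- l₁ = 1, so klBern μ₁ l₁ = ⊤
      have ho1 : l₁ = 1 := ho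
      have h1top : klBern μ₁ l₁ = ⊤ := by
        simp [klBern, ho1, ne_of_lt (lt_of_lt_of_le h h21)]
      rw [h1top]
      calc klBern μ₁ m + klBern μ₂ m ≤ ⊤ := le_top
      _ = ⊤ + 0 := by simp
      _ ≤ ⊤ + klBern μ₂ l₂ := add_le_add le_rfl (klBern_nonneg h₂ hl₂)
    have hl₁' : l₁ ∈ Set.Ioo (0:ℝ) 1 := ⟨lt_of_lt_of_le hz hle, ho⟩
    have hl₂' : l₂ ∈ Set.Ioo (0:ℝ) 1 := ⟨hz, lt_of_le_of_lt hle ho⟩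
    rw [hA, hB, klBern_eq h₁ hl₁', klBern_eq h₂ hl₂', ← EReal.coe_add, ← EReal.coe_add,
      EReal.coe_le_coe_iff]
    have := hlow l₁ l₂ hl₁' hl₂' hle
    linarith
  constructor
  · refine le_antisymm ?_ (le_iInf hLB)
    exact iInf_le _ (⟨(m, m), hmIcc, hmIcc, le_refl m⟩ :
      {p : ℝ × ℝ // p.1 ∈ Set.Icc (0:ℝ) 1 ∧ p.2 ∈ Set.Icc (0:ℝ) 1 ∧ p.2 ≤ p.1})
  · rw [hA, hB, ← EReal.coe_add]
    exact_mod_cast (by linarith : (0:ℝ) < (phiB μ₁ μ₁ - phiB μ₁ m) + (phiB μ₂ μ₂ - phiB μ₂ m))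
end
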